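/- For every n ∈ ℕ and every simple graph G on n vertices, it is not the case that 0 < f(G) < n − 2. -/

import Mathlib

open Finset

open Classical in
/-- A triple of distinct vertices is *frustrated* if it induces an odd number of edges. -/
noncomputable def frustrated {V : Type*} (G : SimpleGraph V) (u v w : V) : Prop :=
  Odd ((if G.Adj u v then 1 else 0) + (if G.Adj u w then 1 else 0) +
       (if G.Adj v w then 1 else 0) : ℕ)

/-- The number of frustrated triangles of `G`: the number of 3-element vertex subsets
inducing an odd number of edges. -/
noncomputable def fCount {V : Type*} [Fintype V] [DecidableEq V] (G : SimpleGraph V) : ℕ := by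
  classical
  exact ((Finset.univ.powersetCard 3).filter
    (fun s : Finset V => ∃ u v w : V, u ≠ v ∧ u ≠ w ∧ v ≠ w ∧ s = {u, v, w} ∧
      frustrated G u v w)).card

open Classical

lemma frust_four {V : Type*} (G : SimpleGraph V) (u v w x : V)
    (h : frustrated G u v w) :
    frustrated G u v x ∨ frustrated G u w x ∨ frustrated G v w x := by
  by_contra hc
  push_neg at hc
  obtain ⟨h1, h2, h3⟩ : ¬frustrated G u v x ∧ ¬frustrated G u w x ∧ ¬frustrated G v w x := hc
  simp only [frustrated, Nat.odd_iff] at h h1 h2 h3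
  split_ifs at h h1 h2 h3 <;> omega

lemma mem_fset {n : ℕ} (G : SimpleGraph (Fin n)) {u v w : Fin n}
    (huv : u ≠ v) (huw : u ≠ w) (hvw : v ≠ w) (hf : frustrated G u v w) :
    ({u, v, w} : Finset (Fin n)) ∈ (Finset.univ.powersetCard 3).filter
      (fun s : Finset (Fin n) => ∃ u v w : Fin n, u ≠ v ∧ u ≠ w ∧ v ≠ w ∧ s = {u, v, w} ∧
        frustrated G u v w) := by
  rw [Finset.mem_filter, Finset.mem_powersetCard]
  exact ⟨⟨Finset.subset_univ _, Finset.card_eq_three.mpr ⟨u, v, w, huv, huw, hvw, rfl⟩⟩,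
    u, v, w, huv, huw, hvw, rfl, hf⟩

theorem fCount_not_in_open_interval
    (n : ℕ) (G : SimpleGraph (Fin n)) :
    ¬ (0 < fCount G ∧ fCount G < n - 2) := by
  classical
  rintro ⟨hpos, hlt⟩
  unfold fCount at hpos hlt
  set S := (Finset.univ.powersetCard 3).filter
      (fun s : Finset (Fin n) => ∃ u v w : Fin n, u ≠ v ∧ u ≠ w ∧ v ≠ w ∧ s = {u, v, w} ∧
        frustrated G u v w) with hSdef
  obtain ⟨s, hs⟩ := Finset.card_pos.mp (show 0 < S.card by convert hpos)
  rw [hSdef, Finset.mem_filter] at hs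
  obtain ⟨hs1, u, v, w, huv, huw, hvw, rfl, hf⟩ := hs
  set T : Finset (Fin n) := {u, v, w} with hT
  set F : Fin n → Finset (Fin n) := fun x =>
    if frustrated G u v x then {u, v, x}
    else if frustrated G u w x then {u, w, x} else {v, w, x} with hF
  have hxmem : ∀ x : Fin n, x ∈ F x := by
    intro x
    simp only [hF]
    split_ifs <;> simp
  have hFsub : ∀ x : Fin n, F x ⊆ insert x T := by
    intro x
    simp only [hF, hT]
    split_ifs <;> intro a ha <;> simp at ha ⊢ <;> tauto
  have hmaps : ∀ x ∈ Finset.univ \ T, F x ∈ S.erase T := by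
    intro x hx
    rw [Finset.mem_sdiff] at hx
    have hxu : x ≠ u := by intro h; subst h; simp [hT] at hx
    have hxv : x ≠ v := by intro h; subst h; simp [hT] at hx
    have hxw : x ≠ w := by intro h; subst h; simp [hT] at hx
    have hne : F x ≠ T := by
      intro h
      exact hx.2 (h ▸ hxmem x)
    refine Finset.mem_erase.mpr ⟨hne, ?_⟩
    rcases frust_four G u v w x hf with h1 | h2 | h3
    · have : F x = {u, v, x} := by simp [hF, h1]
      rw [hSdef, this]
      exact mem_fset G huv hxu.symm hxv.symm h1
    · by_cases h1 : frustrated G u v x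
      · have : F x = {u, v, x} := by simp [hF, h1]
        rw [hSdef, this]
        exact mem_fset G huv hxu.symm hxv.symm h1
      · have : F x = {u, w, x} := by simp [hF, h1, h2]
        rw [hSdef, this]
        exact mem_fset G huw hxu.symm hxw.symm h2
    · by_cases h1 : frustrated G u v x
      · have : F x = {u, v, x} := by simp [hF, h1]
        rw [hSdef, this]
        exact mem_fset G huv hxu.symm hxv.symm h1
      · by_cases h2 : frustrated G u w x
        · have : F x = {u, w, x} := by simp [hF, h1, h2]
          rw [hSdef, this]
          exact mem_fset G huw hxu.symm hxw.symm h2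
        · have : F x = {v, w, x} := by simp [hF, h1, h2]
          rw [hSdef, this]
          exact mem_fset G hvw hxv.symm hxw.symm h3
  have hinj : Set.InjOn F (Finset.univ \ T : Finset (Fin n)) := by
    intro x hx y hy hxy
    simp only [Finset.coe_sdiff, Set.mem_diff, Finset.coe_univ, Finset.mem_coe] at hx hy
    have : x ∈ insert y T := hFsub y (hxy ▸ hxmem x)
    rcases Finset.mem_insert.mp this with h | h
    · exact h
    · exact absurd h hx.2
  have hcard1 : (Finset.univ \ T : Finset (Fin n)).card ≤ (S.erase T).card :=
    Finset.card_le_card_of_injOn F hmaps hinj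
  have hTcard : T.card = 3 := Finset.card_eq_three.mpr ⟨u, v, w, huv, huw, hvw, rfl⟩
  have hsd : (Finset.univ \ T : Finset (Fin n)).card = n - 3 := by
    rw [Finset.card_sdiff_of_subset (Finset.subset_univ _), hTcard, Finset.card_univ, Fintype.card_fin]
  have hTS : T ∈ S := by
    rw [hSdef, hT]
    exact Finset.mem_filter.mpr ⟨hs1, u, v, w, huv, huw, hvw, rfl, hf⟩
  have herase : (S.erase T).card = S.card - 1 := Finset.card_erase_of_mem hTS
  have hScard : 0 < S.card := by convert hpos
  have hSlt : S.card < n - 2 := by convert hlt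
  omega
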